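/- For a bounded linear operator A on a Hilbert space H and f ∈ H, the function φ(a) = ‖A (A*A + aI)^{-1} A* f − f‖ is monotonically nondecreasing in a for a > 0 (equivalently, the discrepancy is a monotone function of the regularization parameter). -/
import Mathlib


open ContinuousLinearMap
open scoped RealInnerProductSpace

theorem discrepancy_monotone
    {H : Type*} [NormedAddCommGroup H] [InnerProductSpace ℝ H] [CompleteSpace H]
    (A : H →L[ℝ] H) (f : H) (u : ℝ → H)
    (hu : ∀ a > (0:ℝ), (adjoint A).comp A (u a) + a • (u a) = adjoint A f) :
    ∀ a b : ℝ, 0 < a → a ≤ b → ‖A (u a) - f‖ ≤ ‖A (u b) - f‖ := by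
  intro a b ha hab
  rcases hab.eq_or_lt with rfl | hlt
  · exact le_refl _
  have hb : 0 < b := ha.trans hlt
  have ea : adjoint A (A (u a)) + a • (u a) = adjoint A f := by
    simpa [comp_apply] using hu a ha
  have eb : adjoint A (A (u b)) + b • (u b) = adjoint A f := by
    simpa [comp_apply] using hu b hb
  set w : H := u a - u b with hw
  have hAAw : adjoint A (A w) + b • w = (b - a) • u a := by
    have h1 : adjoint A (A (u a)) = adjoint A f - a • u a := by
      rw [← ea]; abel
    have h2 : adjoint A (A (u b)) = adjoint A f - b • u b := by
      rw [← eb]; abel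
    have : adjoint A (A w) = adjoint A (A (u a)) - adjoint A (A (u b)) := by
      simp [hw, map_sub]
    rw [this, h1, h2, hw, sub_smul, smul_sub]
    abel
  have hkey : (b - a) * ⟪u a, w⟫ = ‖A w‖ ^ 2 + b * ‖w‖ ^ 2 := by
    have := congrArg (fun x : H => ⟪x, w⟫) hAAw
    simp only [inner_add_left, inner_smul_left, adjoint_inner_left,
      starRingEnd_apply, star_trivial] at this
    rw [← this, real_inner_self_eq_norm_sq, real_inner_self_eq_norm_sq]
  have hinner : 0 ≤ ⟪u a, w⟫ := by
    have hba : 0 < b - a := sub_pos.mpr hlt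
    nlinarith [sq_nonneg ‖A w‖, sq_nonneg ‖w‖, hb.le]
  have hArw : adjoint A (A (u a) - f) = -(a • u a) := by
    rw [map_sub]
    have h1 : adjoint A (A (u a)) = adjoint A f - a • u a := by
      rw [← ea]; abel
    rw [h1]; abel
  have hcross : ⟪A (u a) - f, (A (u b) - f) - (A (u a) - f)⟫ = a * ⟪u a, w⟫ := by
    have hd : (A (u b) - f) - (A (u a) - f) = -(A w) := by
      simp [hw, map_sub]
    rw [hd, inner_neg_right, ← adjoint_inner_left, hArw, inner_neg_left,
      real_inner_smul_left, neg_neg]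
  have hsq : ‖A (u a) - f‖ ^ 2 ≤ ‖A (u b) - f‖ ^ 2 := by
    have hexp : A (u b) - f = (A (u a) - f) + ((A (u b) - f) - (A (u a) - f)) := by abel
    have := norm_add_sq_real (A (u a) - f) ((A (u b) - f) - (A (u a) - f))
    rw [← hexp] at this
    nlinarith [sq_nonneg ‖(A (u b) - f) - (A (u a) - f)‖, ha.le]
  nlinarith [norm_nonneg (A (u a) - f), norm_nonneg (A (u b) - f)]
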